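/- In the continuous setting with E non-increasing, the integral bound ∫₀^∞ a_t c_t ‖∇f(X(t))‖² dt ≤ A₀(f(x₀) − f*) + (1/2)·dist(x₀, Ω)² holds, where Ω is the set of minimizers of f. -/

import Mathlib

open Set Filter Topology MeasureTheory

local notation "⟪" x ", " y "⟫" => @inner ℝ _ _ x y

lemma convex_grad_ineq {H : Type*} [NormedAddCommGroup H] [InnerProductSpace ℝ H]
    [CompleteSpace H] (f : H → ℝ) (hconv : ConvexOn ℝ Set.univ f)
    (x y gx : H) (hg : HasGradientAt f gx x) :
    f x + ⟪gx, y - x⟫ ≤ f y := by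
  have hfd : HasFDerivAt f (InnerProductSpace.toDual ℝ H gx) x :=
    (hasGradientAt_iff_hasFDerivAt).1 hg
  have hfd' : HasFDerivAt f (InnerProductSpace.toDual ℝ H gx) ((0:ℝ) • (y - x) + x) := by
    simpa using hfd
  have hline : HasDerivAt (fun s : ℝ => s • (y - x) + x) (y - x) 0 := by
    simpa using ((hasDerivAt_id (0:ℝ)).smul_const (y - x)).add_const x
  have hφ : HasDerivAt (fun s : ℝ => f (s • (y - x) + x)) ⟪gx, y - x⟫ 0 := by
    have := hfd'.comp_hasDerivAt 0 hline
    simpa [InnerProductSpace.toDual_apply_apply, Function.comp_def] using this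
  have hslope : ∀ s : ℝ, s ∈ Set.Ioo (0:ℝ) 1 →
      slope (fun s : ℝ => f (s • (y - x) + x)) 0 s ≤ f y - f x := by
    intro s hs
    have hcvx := hconv.2 (Set.mem_univ x) (Set.mem_univ y)
      (by linarith [hs.1, hs.2] : (0:ℝ) ≤ 1 - s) hs.1.le (by ring)
    simp only [smul_eq_mul] at hcvx
    have hxy : s • (y - x) + x = (1 - s) • x + s • y := by
      module
    rw [slope_def_field, sub_zero, div_le_iff₀ hs.1]
    have h0 : (0:ℝ) • (y - x) + x = x := by simp
    rw [h0, hxy]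
    calc f ((1 - s) • x + s • y) - f x ≤ ((1-s) * f x + s * f y) - f x := by linarith [hcvx]
      _ = (f y - f x) * s := by ring
  have htend : Tendsto (slope (fun s : ℝ => f (s • (y - x) + x)) 0) (𝓝[>] 0)
      (𝓝 ⟪gx, y - x⟫) :=
    (hasDerivAt_iff_tendsto_slope.1 hφ).mono_left
      (nhdsWithin_mono 0 (fun u hu => ne_of_gt hu))
  have hle : ⟪gx, y - x⟫ ≤ f y - f x := by
    refine le_of_tendsto htend ?_
    filter_upwards [Ioo_mem_nhdsGT_of_mem (Set.mem_Ico.2 ⟨le_rfl, one_pos⟩)] with s hs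
    exact hslope s hs
  linarith

/-- Integral bound
`∫₀^∞ a_t c_t ‖∇f(X t)‖² dt ≤ A₀ (f x₀ - f*) + (1/2) dist(x₀, Ω)²`,
where `Ω` is the set of minimizers of `f`. -/
theorem sppa_stmt3
    {H : Type*} [NormedAddCommGroup H] [InnerProductSpace ℝ H] [CompleteSpace H]
    (f : H → ℝ) (g : H → H)
    (hconv : ConvexOn ℝ Set.univ f)
    (hgrad : ∀ x, HasGradientAt f (g x) x)
    (Ω : Set H) (hΩ : Ω = {y : H | ∀ w, f y ≤ f w}) (hΩne : Ω.Nonempty)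
    (xs : H) (hxs : xs ∈ Ω)
    (a b c : ℝ → ℝ)
    (hapos : ∀ t > (0:ℝ), 0 < a t) (hbpos : ∀ t > (0:ℝ), 0 < b t)
    (hcpos : ∀ t > (0:ℝ), 0 < c t)
    (ha0 : 0 ≤ a 0) (hb0 : 0 ≤ b 0) (hc0 : 0 ≤ c 0)
    (x0 : H) (X Z X' : ℝ → H)
    (hX0 : X 0 = x0) (hZ0 : Z 0 = x0)
    (hX : ∀ t ∈ Set.Ici (0:ℝ), HasDerivAt X (X' t) t)
    (hZeq : ∀ t ∈ Set.Ici (0:ℝ), Z t = b t • X' t + c t • g (X t) + X t)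
    (hZ' : ∀ t ∈ Set.Ici (0:ℝ), HasDerivAt Z (-(a t) • g (X t)) t)
    (A' : ℝ → ℝ)
    (hA : ∀ t ∈ Set.Ici (0:ℝ), HasDerivAt (fun s => a s * b s) (A' t) t)
    (hA'nonneg : ∀ t ∈ Set.Ici (0:ℝ), 0 ≤ A' t)
    (hA'le : ∀ t ∈ Set.Ici (0:ℝ), A' t ≤ a t) :
    ∫ t in Set.Ioi (0:ℝ), a t * c t * ‖g (X t)‖^2 ≤
      a 0 * b 0 * (f x0 - f xs) + (1/2) * (Metric.infDist x0 Ω)^2 := by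
  have hxsmin : ∀ w, f xs ≤ f w := by rw [hΩ] at hxs; exact hxs
  have hfx0 : 0 ≤ f x0 - f xs := sub_nonneg.2 (hxsmin x0)
  by_cases hint : IntegrableOn (fun t => a t * c t * ‖g (X t)‖^2) (Set.Ioi (0:ℝ)) volume
  swap
  · rw [MeasureTheory.integral_undef hint]
    have h1 : (0:ℝ) ≤ a 0 * b 0 * (f x0 - f xs) :=
      mul_nonneg (mul_nonneg ha0 hb0) hfx0
    have h2 : (0:ℝ) ≤ (1/2) * (Metric.infDist x0 Ω)^2 := by positivity
    linarith
  -- nonnegativity of coefficients on `[0, ∞)`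
  have han : ∀ t ∈ Set.Ici (0:ℝ), 0 ≤ a t := by
    intro t ht; rcases eq_or_lt_of_le (Set.mem_Ici.1 ht : (0:ℝ) ≤ t) with h | h
    · rw [← h]; exact ha0
    · exact (hapos t h).le
  have hbn : ∀ t ∈ Set.Ici (0:ℝ), 0 ≤ b t := by
    intro t ht; rcases eq_or_lt_of_le (Set.mem_Ici.1 ht : (0:ℝ) ≤ t) with h | h
    · rw [← h]; exact hb0
    · exact (hbpos t h).le
  -- main bound, for an arbitrary minimizer `y`
  have key : ∀ y ∈ Ω, (∫ t in Set.Ioi (0:ℝ), a t * c t * ‖g (X t)‖^2) ≤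
      a 0 * b 0 * (f x0 - f xs) + (1/2) * (dist x0 y)^2 := by
    intro y hy
    have hymin : ∀ w, f y ≤ f w := by rw [hΩ] at hy; exact hy
    have hfy : f y = f xs := le_antisymm (hymin xs) (hxsmin y)
    set E : ℝ → ℝ := fun t => a t * b t * (f (X t) - f y) + (1/2) * ⟪Z t - y, Z t - y⟫
      with hEdef
    set E' : ℝ → ℝ := fun t => (A' t * (f (X t) - f y) + a t * b t * ⟪g (X t), X' t⟫)
      + (1/2) * (⟪Z t - y, -(a t) • g (X t)⟫ + ⟪-(a t) • g (X t), Z t - y⟫) with hE'def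
    have hE : ∀ t ∈ Set.Ici (0:ℝ), HasDerivAt E (E' t) t := by
      intro t ht
      have hfX : HasDerivAt (fun s => f (X s)) ⟪g (X t), X' t⟫ t := by
        have hfd : HasFDerivAt f (InnerProductSpace.toDual ℝ H (g (X t))) (X t) :=
          (hasGradientAt_iff_hasFDerivAt).1 (hgrad (X t))
        simpa [InnerProductSpace.toDual_apply_apply, Function.comp_def] using hfd.comp_hasDerivAt t (hX t ht)
      have h1 : HasDerivAt (fun s => a s * b s * (f (X s) - f y))
          (A' t * (f (X t) - f y) + a t * b t * ⟪g (X t), X' t⟫) t := by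
        exact (hA t ht).mul (hfX.sub_const (f y))
      have hZy : HasDerivAt (fun s => Z s - y) (-(a t) • g (X t)) t := (hZ' t ht).sub_const y
      have h2 : HasDerivAt (fun s => ⟪Z s - y, Z s - y⟫)
          (⟪Z t - y, -(a t) • g (X t)⟫ + ⟪-(a t) • g (X t), Z t - y⟫) t := HasDerivAt.inner ℝ hZy hZy
      exact h1.add (h2.const_mul (1/2))
    have hE'le : ∀ t ∈ Set.Ici (0:ℝ), E' t ≤ -(a t * c t * ‖g (X t)‖^2) := by
      intro t ht
      have hZsub : Z t - y = b t • X' t + c t • g (X t) + (X t - y) := by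
        rw [hZeq t ht]; abel
      have hcg := convex_grad_ineq f hconv (X t) y (g (X t)) (hgrad (X t))
      have hq : f (X t) - f y ≤ ⟪g (X t), X t - y⟫ := by
        have : ⟪g (X t), y - X t⟫ = -⟪g (X t), X t - y⟫ := by
          rw [← inner_neg_right]; congr 1; abel
        linarith [hcg, this.le, this.ge]
      have e1 : ⟪-(a t) • g (X t), Z t - y⟫ =
          -(a t * (b t * ⟪g (X t), X' t⟫)) - a t * (c t * ‖g (X t)‖^2)
            - a t * ⟪g (X t), X t - y⟫ := by
        rw [hZsub]
        simp only [inner_add_right, real_inner_smul_left, real_inner_smul_right,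
          real_inner_self_eq_norm_sq]
        ring
      have e2 : ⟪Z t - y, -(a t) • g (X t)⟫ =
          -(a t * (b t * ⟪g (X t), X' t⟫)) - a t * (c t * ‖g (X t)‖^2)
            - a t * ⟪g (X t), X t - y⟫ := by
        rw [real_inner_comm]; exact e1
      have hp : 0 ≤ f (X t) - f y := sub_nonneg.2 (hymin (X t))
      have hAp : A' t * (f (X t) - f y) ≤ a t * (f (X t) - f y) :=
        mul_le_mul_of_nonneg_right (hA'le t ht) hp
      have haq : a t * (f (X t) - f y) ≤ a t * ⟪g (X t), X t - y⟫ :=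
        mul_le_mul_of_nonneg_left hq (han t ht)
      rw [hE'def]
      simp only [e1, e2]
      ring_nf
      nlinarith [hAp, haq]
    have hEnonneg : ∀ t ∈ Set.Ici (0:ℝ), 0 ≤ E t := by
      intro t ht
      have h1 : (0:ℝ) ≤ a t * b t * (f (X t) - f y) :=
        mul_nonneg (mul_nonneg (han t ht) (hbn t ht)) (sub_nonneg.2 (hymin (X t)))
      have h2 : (0:ℝ) ≤ ⟪Z t - y, Z t - y⟫ := real_inner_self_nonneg
      rw [hEdef]; dsimp only; linarith
    have hE0 : E 0 = a 0 * b 0 * (f x0 - f xs) + (1/2) * (dist x0 y)^2 := by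
      rw [hEdef]; dsimp only
      rw [hX0, hZ0, hfy, real_inner_self_eq_norm_sq, dist_eq_norm]
    have perT : ∀ T : ℝ, 0 ≤ T →
        (∫ t in (0:ℝ)..T, a t * c t * ‖g (X t)‖^2) ≤ E 0 := by
      intro T hT
      have hcont : ContinuousOn E (Set.Icc 0 T) := fun t htm =>
        ((hE t htm.1).continuousAt).continuousWithinAt
      have hderiv : ∀ t ∈ Set.Ioo (0:ℝ) T, HasDerivWithinAt E (E' t) (Set.Ioi t) t :=
        fun t htm => ((hE t htm.1.le).hasDerivWithinAt)
      have hIoc : IntegrableOn (fun t => a t * c t * ‖g (X t)‖^2) (Set.Ioc 0 T) volume :=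
        hint.mono_set Set.Ioc_subset_Ioi_self
      have φint : IntegrableOn (fun t => -(a t * c t * ‖g (X t)‖^2)) (Set.Icc 0 T) volume :=
        ((integrableOn_Icc_iff_integrableOn_Ioc).2 hIoc).neg
      have hbnd := intervalIntegral.sub_le_integral_of_hasDeriv_right_of_le hT hcont hderiv φint
        (fun t htm => hE'le t htm.1.le)
      rw [intervalIntegral.integral_neg] at hbnd
      have hET := hEnonneg T hT
      linarith
    have htends := MeasureTheory.intervalIntegral_tendsto_integral_Ioi 0 hint
      (tendsto_id (α := ℝ) (x := atTop))
    have hle := le_of_tendsto htends (eventually_atTop.2 ⟨0, fun T hT => perT T hT⟩)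
    rw [hE0] at hle
    exact hle
  -- pass to the infimum over `Ω`
  set I := ∫ t in Set.Ioi (0:ℝ), a t * c t * ‖g (X t)‖^2 with hIdef
  set C := a 0 * b 0 * (f x0 - f xs) with hCdef
  set d := Metric.infDist x0 Ω with hddef
  have hd0 : 0 ≤ d := Metric.infDist_nonneg
  have keyε : ∀ ε > (0:ℝ), I ≤ C + (1/2) * (d + ε)^2 := by
    intro ε hε
    obtain ⟨y, hyΩ, hyd⟩ := (Metric.infDist_lt_iff hΩne).1
      (show Metric.infDist x0 Ω < d + ε by rw [← hddef]; linarith)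
    have h1 := key y hyΩ
    have h2 : (dist x0 y)^2 ≤ (d + ε)^2 := by
      apply sq_le_sq' <;> nlinarith [dist_nonneg (x := x0) (y := y)]
    calc I ≤ C + (1/2) * (dist x0 y)^2 := h1
      _ ≤ C + (1/2) * (d + ε)^2 := by linarith
  have htend : Tendsto (fun ε : ℝ => C + (1/2) * (d + ε)^2) (𝓝[>] 0)
      (𝓝 (C + (1/2) * d^2)) := by
    have : Continuous (fun ε : ℝ => C + (1/2) * (d + ε)^2) :=
      continuous_const.add (continuous_const.mul ((continuous_const.add continuous_id).pow 2))
    have h0 := this.tendsto 0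
    simp only [add_zero] at h0
    exact h0.mono_left nhdsWithin_le_nhds
  exact ge_of_tendsto htend (by
    filter_upwards [self_mem_nhdsWithin] with ε hε
    exact keyε ε hε)
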